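/- arXiv:2207.14484 — 7 statements merged into one kernel-verified Lean document; each statement's English description precedes it below -/
import Mathlib

section
/- For the quadratic recurrence characteristic polynomial p(z) = z² − (1 + β − ηa) z + β with 0 ≤ β < 1, η > 0, a > 0: p has a real root of magnitude greater than 1 if and only if a > (2 + 2β)/η or a < 0; in particular, when a = (2+2β)/η, the root z = −1 satisfies p(−1) = 0. -/
theorem heavyball_charpoly_root (β η : ℝ) (hβ0 : 0 ≤ β) (hβ1 : β < 1) (hη : 0 < η) :
    (∀ a : ℝ,
      (∃ z : ℝ, z ^ 2 - (1 + β - η * a) * z + β = 0 ∧ |z| > 1) ↔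
        (a > (2 + 2 * β) / η ∨ a < 0)) ∧
    ((-1 : ℝ) ^ 2 - (1 + β - η * ((2 + 2 * β) / η)) * (-1) + β = 0) := by
  constructor
  · intro a
    constructor
    · rintro ⟨z, hz, habs⟩
      rw [gt_iff_lt, lt_abs] at habs
      rcases habs with h1 | h1
      · -- z > 1, show a < 0
        right
        have key : η * a * z = -((z - 1) * (z - β)) := by linear_combination hz
        have hzpos : (0:ℝ) < z := by linarith
        have hneg : η * a * z < 0 := by nlinarith
        have hηa : η * a < 0 := by nlinarith
        by_contra h
        push_neg at h
        nlinarith [mul_nonneg hη.le h]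
      · -- z < -1, show a > (2+2β)/η
        left
        have hz1 : z < -1 := by linarith
        have key : z * (2 + 2 * β - η * a) = (z + 1) * (z + β) := by
          linear_combination -hz
        have h1 : (z + 1) * (z + β) > 0 := by nlinarith
        have h2 : 2 + 2 * β - η * a < 0 := by nlinarith
        rw [gt_iff_lt, div_lt_iff₀ hη]
        nlinarith
    · rintro (ha | ha)
      · -- a > (2+2β)/η : root (s - d)/2 < -1
        have hηa : 2 + 2 * β < η * a := by
          rw [gt_iff_lt, div_lt_iff₀ hη] at ha; nlinarith
        set s : ℝ := 1 + β - η * a with hs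
        have hslt : s < -(1 + β) := by simp [hs]; nlinarith
        have hdisc : 0 ≤ s ^ 2 - 4 * β := by nlinarith [sq_nonneg (1 - β)]
        set d : ℝ := Real.sqrt (s ^ 2 - 4 * β) with hd
        have hd0 : 0 ≤ d := Real.sqrt_nonneg _
        have hd2 : d ^ 2 = s ^ 2 - 4 * β := Real.sq_sqrt hdisc
        have hzlt : (s - d) / 2 < -1 := by
          by_contra h
          push_neg at h
          have hle : d ≤ s + 2 := by linarith
          have h2 : (0:ℝ) ≤ s + 2 := le_trans hd0 hle
          nlinarith [mul_le_mul hle hle hd0 h2]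
        refine ⟨(s - d) / 2, ?_, ?_⟩
        · linear_combination hd2 / 4
        · rw [gt_iff_lt, lt_abs]; right; linarith
      · -- a < 0 : root (s + d)/2 > 1
        have hηa : η * a < 0 := mul_neg_of_pos_of_neg hη ha
        set s : ℝ := 1 + β - η * a with hs
        have hsgt : 1 + β < s := by simp [hs]; nlinarith
        have hdisc : 0 ≤ s ^ 2 - 4 * β := by nlinarith [sq_nonneg (1 - β)]
        set d : ℝ := Real.sqrt (s ^ 2 - 4 * β) with hd
        have hd0 : 0 ≤ d := Real.sqrt_nonneg _
        have hd2 : d ^ 2 = s ^ 2 - 4 * β := Real.sq_sqrt hdisc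
        have hzgt : 1 < (s + d) / 2 := by
          by_contra h
          push_neg at h
          have hle : d ≤ 2 - s := by linarith
          have h2 : (0:ℝ) ≤ 2 - s := le_trans hd0 hle
          nlinarith [mul_le_mul hle hle hd0 h2]
        refine ⟨(s + d) / 2, ?_, ?_⟩
        · linear_combination hd2 / 4
        · rw [gt_iff_lt, lt_abs]; left; linarith
  · field_simp
    ring
end

section
/- Let A be a symmetric matrix with eigenvector q and eigenvalue a. If the iterates of EmaHB(η, β₁) on f(x) = (1/2)xᵀAx + bᵀx + c are run with 0 ≤ β₁ < 1, η > 0, and a > (2 + 2β₁)/(η(1−β₁)), then for generic initializations the sequence qᵀx_t diverges in absolute value. -/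
open Filter Matrix

theorem emaHB_unstable_eigendirection (n : ℕ) (A : Matrix (Fin n) (Fin n) ℝ)
    (hA : A.IsSymm) (q : Fin n → ℝ) (hq : q ≠ 0) (a : ℝ)
    (heig : A.mulVec q = a • q) (b : Fin n → ℝ) (η β₁ : ℝ)
    (hβ0 : 0 ≤ β₁) (hβ1 : β₁ < 1) (hη : 0 < η)
    (hsharp : a > (2 + 2 * β₁) / (η * (1 - β₁))) :
    ∃ r s ystar : ℝ,
      r ^ 2 - (1 + β₁ - η * (1 - β₁) * a) * r + β₁ = 0 ∧
      s ^ 2 - (1 + β₁ - η * (1 - β₁) * a) * s + β₁ = 0 ∧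
      |r| > 1 ∧
      ystar = (1 + β₁ - η * (1 - β₁) * a) * ystar - β₁ * ystar
        - η * (1 - β₁) * (q ⬝ᵥ b) ∧
      ∀ x m : ℕ → Fin n → ℝ,
        (∀ t, m (t + 1) = β₁ • m t + (1 - β₁) • (A.mulVec (x t) + b)) →
        (∀ t, x (t + 1) = x t - η • m (t + 1)) →
        q ⬝ᵥ x 1 - ystar ≠ s * (q ⬝ᵥ x 0 - ystar) →
        Tendsto (fun t => |q ⬝ᵥ x t|) atTop atTop := by
  have hden : 0 < η * (1 - β₁) := mul_pos hη (by linarith)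
  have hca : 2 + 2 * β₁ < η * (1 - β₁) * a := by
    rw [gt_iff_lt, div_lt_iff₀ hden] at hsharp
    linarith
  have ha_pos : 0 < a := by nlinarith
  set c : ℝ := 1 + β₁ - η * (1 - β₁) * a with hc_def
  have hc : c < -(1 + β₁) := by rw [hc_def]; linarith
  set D : ℝ := c ^ 2 - 4 * β₁ with hD_def
  have hD1 : (1 - β₁) ^ 2 < D := by
    rw [hD_def]
    nlinarith [mul_pos (by linarith : (0:ℝ) < -(c + (1 + β₁)))
      (by linarith : (0:ℝ) < -(c - (1 + β₁)))]
  have hD0 : 0 ≤ D := le_trans (sq_nonneg _) hD1.le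
  set sq : ℝ := Real.sqrt D with hsq_def
  have hsq2 : sq * sq = D := Real.mul_self_sqrt hD0
  have hsq1 : 1 - β₁ < sq := (Real.lt_sqrt (by linarith)).2 hD1
  have hsq_pos : 0 < sq := by linarith
  have hsq_le : sq ≤ -c := by
    have h1 : D ≤ c ^ 2 := by rw [hD_def]; linarith
    calc sq ≤ Real.sqrt (c ^ 2) := Real.sqrt_le_sqrt h1
      _ = |c| := Real.sqrt_sq_eq_abs c
      _ = -c := abs_of_neg (by linarith)
  have hsq_ge : -c - 2 ≤ sq := by
    have h2 : (c + 2) ^ 2 ≤ D := by rw [hD_def]; nlinarith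
    calc -c - 2 ≤ |c + 2| := by
          have := neg_le_abs (c + 2); linarith
      _ = Real.sqrt ((c + 2) ^ 2) := (Real.sqrt_sq_eq_abs _).symm
      _ ≤ sq := Real.sqrt_le_sqrt h2
  set r : ℝ := (c - sq) / 2 with hr_def
  set s : ℝ := (c + sq) / 2 with hs_def
  have hr_lt : r < -1 := by rw [hr_def]; linarith
  have hs_le0 : s ≤ 0 := by rw [hs_def]; linarith
  have hs_ge : -1 ≤ s := by rw [hs_def]; linarith
  have hs_abs : |s| ≤ 1 := abs_le.2 ⟨hs_ge, by linarith⟩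
  have hrs : r < s := by rw [hr_def, hs_def]; linarith
  have hrs_ne : r - s ≠ 0 := by linarith
  have hr_root : r ^ 2 - c * r + β₁ = 0 := by
    rw [hr_def]; linear_combination (hsq2 + hD_def) / 4
  have hs_root : s ^ 2 - c * s + β₁ = 0 := by
    rw [hs_def]; linear_combination (hsq2 + hD_def) / 4
  set yst : ℝ := -(q ⬝ᵥ b) / a with hyst_def
  have hfix : yst = c * yst - β₁ * yst - η * (1 - β₁) * (q ⬝ᵥ b) := by
    rw [hyst_def, hc_def]
    field_simp
    ring
  refine ⟨r, s, yst, hr_root, hs_root, ?_, hfix, ?_⟩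
  · rw [abs_of_neg (by linarith : r < 0)]; linarith
  intro x m hm hx hinit
  have haq : ∀ v : Fin n → ℝ, q ⬝ᵥ A.mulVec v = a * (q ⬝ᵥ v) := by
    intro v
    rw [Matrix.dotProduct_mulVec, ← Matrix.mulVec_transpose, hA.eq, heig,
      smul_dotProduct, smul_eq_mul]
  set y : ℕ → ℝ := fun t => q ⬝ᵥ x t with hy_def
  set u : ℕ → ℝ := fun t => q ⬝ᵥ m t with hu_def
  have hy : ∀ t, y (t + 1) = y t - η * u (t + 1) := by
    intro t
    simp only [hy_def, hu_def, hx t, dotProduct_sub, dotProduct_smul,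
      smul_eq_mul]
  have hu : ∀ t, u (t + 1) = β₁ * u t + (1 - β₁) * (a * y t + q ⬝ᵥ b) := by
    intro t
    simp only [hu_def, hy_def, hm t, dotProduct_add, dotProduct_smul,
      smul_eq_mul, haq]
  have hyrec : ∀ t, y (t + 2) = c * y (t + 1) - β₁ * y t - η * (1 - β₁) * (q ⬝ᵥ b) := by
    intro t
    have h1 := hy (t + 1)
    have h2 := hu (t + 1)
    have h3 := hy t
    rw [hc_def]
    linear_combination h1 - η * h2 - β₁ * h3
  set z : ℕ → ℝ := fun t => y t - yst with hz_def
  have hzrec : ∀ t, z (t + 2) = c * z (t + 1) - β₁ * z t := by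
    intro t
    simp only [hz_def]
    linear_combination hyrec t - hfix
  set α : ℝ := (z 1 - s * z 0) / (r - s) with hα_def
  set B : ℝ := (r * z 0 - z 1) / (r - s) with hB_def
  have hα : α ≠ 0 := by
    apply div_ne_zero _ hrs_ne
    simpa [hz_def, hy_def, sub_ne_zero] using sub_ne_zero.2 hinit
  have hclosed : ∀ t, z t = α * r ^ t + B * s ^ t := by
    have key : ∀ t, z t = α * r ^ t + B * s ^ t ∧
        z (t + 1) = α * r ^ (t + 1) + B * s ^ (t + 1) := by
      intro t
      induction t with
      | zero =>
        constructor
        · rw [hα_def, hB_def]; field_simp; ring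
        · rw [hα_def, hB_def]; field_simp; ring
      | succ k ih =>
        refine ⟨ih.2, ?_⟩
        have hr2 : r ^ 2 = c * r - β₁ := by linarith [hr_root]
        have hs2 : s ^ 2 = c * s - β₁ := by linarith [hs_root]
        calc z (k + 2) = c * z (k + 1) - β₁ * z k := hzrec k
          _ = α * r ^ k * (c * r - β₁) + B * s ^ k * (c * s - β₁) := by
              rw [ih.1, ih.2]; ring
          _ = α * r ^ k * r ^ 2 + B * s ^ k * s ^ 2 := by rw [hr2, hs2]
          _ = α * r ^ (k + 2) + B * s ^ (k + 2) := by ring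
    exact fun t => (key t).1
  have hgrow : Tendsto (fun t : ℕ => |α| * (-r) ^ t - (|B| + |yst|)) atTop atTop := by
    apply tendsto_atTop_add_const_right
    exact (tendsto_pow_atTop_atTop_of_one_lt (by linarith : 1 < -r)).const_mul_atTop
      (abs_pos.2 hα)
  apply tendsto_atTop_mono _ hgrow
  intro t
  have hzt := hclosed t
  have h1 : |α * r ^ t| = |α| * (-r) ^ t := by
    rw [abs_mul, abs_pow, abs_of_neg (by linarith : r < 0)]
  have h2 : |B * s ^ t| ≤ |B| := by
    rw [abs_mul, abs_pow]
    calc |B| * |s| ^ t ≤ |B| * 1 := by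
          exact mul_le_mul_of_nonneg_left (pow_le_one₀ (abs_nonneg s) hs_abs) (abs_nonneg B)
      _ = |B| := mul_one _
  have h3 : |α * r ^ t| ≤ |α * r ^ t + B * s ^ t| + |B * s ^ t| := by
    have := abs_add_le (α * r ^ t + B * s ^ t) (-(B * s ^ t))
    simpa using this
  have h4 : |z t| ≤ |y t| + |yst| := by
    simp only [hz_def]
    exact abs_sub (y t) yst
  rw [hzt] at h4
  simp only [hy_def] at *
  linarith
end

section
/- Let q be an eigenvector of the symmetric matrix A with eigenvalue a. If EmaNesterov(η, β₁) is run on f(x) = (1/2)xᵀAx + bᵀx + c with 0 ≤ β₁ < 1, η > 0, and a > (2 + 2β₁)/(η(1−β₁)(1 + 2β₁)), then for generic initializations the sequence qᵀx_t diverges. -/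
open Filter Matrix

private lemma ema_aux1 (μ β : ℝ) (h : μ * (1 + 2 * β) < -1) :
    (1 + β) ^ 2 * μ ^ 2 - 4 * β * μ > ((1 + β) * μ + 2) ^ 2 := by nlinarith

private lemma ema_aux2 (d P : ℝ) (hd : 0 < d) (h : d ^ 2 > (P + 2) ^ 2) : P + 2 < d := by
  nlinarith

theorem emaNesterov_unstable_eigendirection (n : ℕ) (A : Matrix (Fin n) (Fin n) ℝ)
    (hA : A.IsSymm) (q : Fin n → ℝ) (hq : q ≠ 0) (a : ℝ)
    (heig : A.mulVec q = a • q) (b : Fin n → ℝ) (η β₁ : ℝ)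
    (hβ0 : 0 ≤ β₁) (hβ1 : β₁ < 1) (hη : 0 < η)
    (hsharp : a > (2 + 2 * β₁) / (η * (1 - β₁) * (1 + 2 * β₁))) :
    ∃ r s ystar : ℝ,
      r ^ 2 - (1 + β₁) * (1 - η * (1 - β₁) * a) * r + β₁ * (1 - η * (1 - β₁) * a) = 0 ∧
      s ^ 2 - (1 + β₁) * (1 - η * (1 - β₁) * a) * s + β₁ * (1 - η * (1 - β₁) * a) = 0 ∧
      |r| > 1 ∧
      ystar = (1 + β₁) * (1 - η * (1 - β₁) * a) * ystar
        - β₁ * (1 - η * (1 - β₁) * a) * ystar - η * (1 - β₁) * (q ⬝ᵥ b) ∧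
      ∀ x m mhat : ℕ → Fin n → ℝ,
        (∀ t, m (t + 1) = β₁ • m t + (1 - β₁) • (A.mulVec (x t) + b)) →
        (∀ t, mhat (t + 1) = β₁ • m (t + 1) + (1 - β₁) • (A.mulVec (x t) + b)) →
        (∀ t, x (t + 1) = x t - η • mhat (t + 1)) →
        q ⬝ᵥ x 1 - ystar ≠ s * (q ⬝ᵥ x 0 - ystar) →
        Tendsto (fun t => |q ⬝ᵥ x t|) atTop atTop := by
  set μ : ℝ := 1 - η * (1 - β₁) * a with hμdef
  set P : ℝ := (1 + β₁) * μ with hPdef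
  set Q : ℝ := β₁ * μ with hQdef
  -- basic positivity facts
  have h1β : (0:ℝ) < 1 - β₁ := by linarith
  have h2β : (0:ℝ) < 1 + 2 * β₁ := by linarith
  have hden : (0:ℝ) < η * (1 - β₁) * (1 + 2 * β₁) := by positivity
  have hkey : μ * (1 + 2 * β₁) < -1 := by
    have := (div_lt_iff₀ hden).mp hsharp
    nlinarith
  have hμneg : μ < 0 := by nlinarith
  have ha : 0 < a := by
    have : (0:ℝ) < (2 + 2 * β₁) / (η * (1 - β₁) * (1 + 2 * β₁)) := by positivity
    linarith
  set D : ℝ := (1 + β₁) ^ 2 * μ ^ 2 - 4 * β₁ * μ with hDdef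
  have hD : 0 < D := by nlinarith [sq_nonneg ((1 + β₁) * μ)]
  set d : ℝ := Real.sqrt D with hddef
  have hd2 : d ^ 2 = D := Real.sq_sqrt hD.le
  have hd0 : 0 < d := Real.sqrt_pos.mpr hD
  refine ⟨(P - d) / 2, (P + d) / 2, -(q ⬝ᵥ b) / a, ?_, ?_, ?_, ?_, ?_⟩
  · linear_combination hd2 / 4
  · linear_combination hd2 / 4
  · -- |r| > 1, i.e. (P - d)/2 < -1
    have hr : (P - d) / 2 < -1 := by
      by_contra h
      push_neg at h
      nlinarith [hd2, hd0]
    rw [abs_of_neg (by linarith)]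
    linarith
  · field_simp
    ring
  · intro x m mhat hm hmhat hx hne
    set r : ℝ := (P - d) / 2 with hrdef
    set s : ℝ := (P + d) / 2 with hsdef
    set ystar : ℝ := -(q ⬝ᵥ b) / a with hystardef
    have hqA : ∀ v : Fin n → ℝ, q ⬝ᵥ A.mulVec v = a * (q ⬝ᵥ v) := by
      intro v
      rw [Matrix.dotProduct_mulVec,
        show vecMul q A = A.mulVec q by rw [← Matrix.vecMul_transpose, hA.eq],
        heig, smul_dotProduct, smul_eq_mul]
    set y : ℕ → ℝ := fun t => q ⬝ᵥ x t with hydef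
    set p : ℕ → ℝ := fun t => q ⬝ᵥ m t with hpdef
    set c : ℝ := q ⬝ᵥ b with hcdef
    have hyrec : ∀ t, y (t + 1) = y t - η * (β₁ * p (t + 1) + (1 - β₁) * (a * y t + c)) := by
      intro t
      simp only [hydef, hpdef, hx t, hmhat t]
      simp [dotProduct_sub, dotProduct_add, dotProduct_smul, hqA,
        smul_eq_mul]
      ring
    have hprec : ∀ t, p (t + 1) = β₁ * p t + (1 - β₁) * (a * y t + c) := by
      intro t
      simp only [hydef, hpdef, hm t]
      simp [dotProduct_add, dotProduct_smul, hqA, smul_eq_mul]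
      ring
    have hstar : ystar = P * ystar - Q * ystar - η * (1 - β₁) * c := by
      rw [hystardef, hPdef, hQdef, hμdef]
      field_simp
      ring
    set z : ℕ → ℝ := fun t => y t - ystar with hzdef
    have hzrec : ∀ t, z (t + 2) = P * z (t + 1) - Q * z t := by
      intro t
      simp only [hzdef]
      linear_combination (hyrec (t + 1)) - η * β₁ * (hprec (t + 1)) - β₁ * (hyrec t)
        - hstar
    set α : ℝ := (z 1 - s * z 0) / (r - s) with hαdef
    set γ : ℝ := (z 0 * r - z 1) / (r - s) with hγdef
    have hz0 : z 0 = (q ⬝ᵥ x 0) - ystar := rfl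
    have hz1 : z 1 = (q ⬝ᵥ x 1) - ystar := rfl
    clear_value μ P Q D d r s ystar y p c z α γ
    have hrs : r - s = -d := by rw [hrdef, hsdef]; ring
    have hrsne : r - s ≠ 0 := by rw [hrs]; exact neg_ne_zero.mpr hd0.ne'
    have hrroot : r ^ 2 = P * r - Q := by
      rw [hrdef]
      linear_combination hd2 / 4 + hDdef / 4 + hQdef - (P + (1 + β₁) * μ) / 4 * hPdef
    have hsroot : s ^ 2 = P * s - Q := by
      rw [hsdef]
      linear_combination hd2 / 4 + hDdef / 4 + hQdef - (P + (1 + β₁) * μ) / 4 * hPdef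
    have hgt : d ^ 2 > (P + 2) ^ 2 := by
      rw [hd2, hDdef, hPdef]
      exact ema_aux1 μ β₁ hkey
    have hPd : P + 2 < d := ema_aux2 d P hd0 hgt
    have hrneg : r < -1 := by
      rw [hrdef]; linarith
    have hrabs : 1 < |r| := by rw [abs_of_neg (by linarith)]; linarith
    have hPneg : P < 0 := by
      rw [hPdef]
      exact mul_neg_of_pos_of_neg (by linarith) hμneg
    have hsr : |s| < |r| := by
      rw [abs_of_neg (show r < 0 by linarith), abs_lt]
      constructor
      · rw [hrdef, hsdef]; linarith
      · rw [hrdef, hsdef]; linarith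
    have hclosed : ∀ t, z t = α * r ^ t + γ * s ^ t := by
      have key : ∀ t, z t = α * r ^ t + γ * s ^ t ∧
          z (t + 1) = α * r ^ (t + 1) + γ * s ^ (t + 1) := by
        intro t
        induction t with
        | zero =>
          constructor
          · rw [hαdef, hγdef]; field_simp; ring
          · rw [hαdef, hγdef]; field_simp; ring
        | succ k ih =>
          refine ⟨ih.2, ?_⟩
          rw [hzrec k, ih.1, ih.2]
          linear_combination (-(α * r ^ k)) * hrroot + (-(γ * s ^ k)) * hsroot
      exact fun t => (key t).1
    have hα : α ≠ 0 := by
      have hnum : z 1 - s * z 0 ≠ 0 := by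
        rw [hz1, hz0]
        exact sub_ne_zero_of_ne hne
      rw [hαdef]
      exact div_ne_zero hnum hrsne
    -- magnitudes
    have hrpos : (0:ℝ) < |r| := by linarith
    -- lower bound
    have hlow : ∀ t, |α| * |r| ^ t - |γ| * |s| ^ t - |ystar| ≤ |q ⬝ᵥ x t| := by
      intro t
      have h1 : |z t| ≤ |q ⬝ᵥ x t| + |ystar| := by
        have : z t = (q ⬝ᵥ x t) - ystar := by rw [hzdef, hydef]
        rw [this]
        exact (abs_sub _ _).trans (by simp)
      have h2 : |α| * |r| ^ t - |γ| * |s| ^ t ≤ |z t| := by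
        rw [hclosed t]
        calc |α| * |r| ^ t - |γ| * |s| ^ t
            = |α * r ^ t| - |γ * s ^ t| := by rw [abs_mul, abs_mul, abs_pow, abs_pow]
          _ ≤ |α * r ^ t + γ * s ^ t| := by
              have h3 := abs_sub_abs_le_abs_sub (α * r ^ t) (-(γ * s ^ t))
              rw [abs_neg, sub_neg_eq_add] at h3
              linarith
      linarith
    have hmain : Tendsto (fun t : ℕ => |α| * |r| ^ t - |γ| * |s| ^ t - |ystar|) atTop atTop := by
      have heq : ∀ t : ℕ, |α| * |r| ^ t - |γ| * |s| ^ t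
          = |r| ^ t * (|α| - |γ| * (|s| / |r|) ^ t) := by
        intro t
        rw [div_pow]
        field_simp
      have hk : Tendsto (fun t : ℕ => (|s| / |r|) ^ t) atTop (nhds 0) := by
        apply tendsto_pow_atTop_nhds_zero_of_lt_one
        · positivity
        · rw [div_lt_one hrpos]; exact hsr
      have hconst : Tendsto (fun t : ℕ => |α| - |γ| * (|s| / |r|) ^ t) atTop (nhds (|α|)) := by
        have : Tendsto (fun t : ℕ => |γ| * (|s| / |r|) ^ t) atTop (nhds 0) := by
          simpa using hk.const_mul |γ|
        simpa using (tendsto_const_nhds (x := |α|)).sub this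
      have hpow : Tendsto (fun t : ℕ => |r| ^ t) atTop atTop :=
        tendsto_pow_atTop_atTop_of_one_lt hrabs
      have := hpow.atTop_mul_pos (abs_pos.mpr hα) hconst
      have h2 : Tendsto (fun t : ℕ => |α| * |r| ^ t - |γ| * |s| ^ t) atTop atTop := by
        simpa [heq] using this
      simpa [sub_eq_add_neg] using tendsto_atTop_add_const_right atTop (-|ystar|) h2
    exact tendsto_atTop_mono hlow hmain
end

section
/- Consider PreconEmaHB(η, β₁, P) on the quadratic f(x) = (1/2)xᵀAx + bᵀx + c, with P symmetric positive definite and A symmetric. If the largest eigenvalue of P^{−1/2}AP^{−1/2} exceeds (2 + 2β₁)/(η(1−β₁)), then for generic initializations the component of P^{1/2}x_t along the top eigenvector v₁ of P^{−1/2}AP^{−1/2} diverges in absolute value. -/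
open Filter Matrix

set_option maxHeartbeats 1000000 in

theorem preconEmaHB_unstable (n : ℕ)
    (A P Pinv Q Qinv : Matrix (Fin n) (Fin n) ℝ)
    (hA : A.IsSymm) (hP : P.PosDef) (hQ : Q.PosDef) (hQQ : Q * Q = P)
    (hPinv : P * Pinv = 1) (hPinv' : Pinv * P = 1)
    (hQinv : Q * Qinv = 1) (hQinv' : Qinv * Q = 1)
    (b : Fin n → ℝ) (η β₁ : ℝ) (hβ0 : 0 ≤ β₁) (hβ1 : β₁ < 1) (hη : 0 < η)
    (v₁ : Fin n → ℝ) (hv₁ : v₁ ≠ 0) (a : ℝ)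
    (heig : (Qinv * A * Qinv).mulVec v₁ = a • v₁)
    (htop : ∀ μ ∈ spectrum ℝ (Qinv * A * Qinv), μ ≤ a)
    (hsharp : a > (2 + 2 * β₁) / (η * (1 - β₁))) :
    ∃ r s ystar : ℝ,
      r ^ 2 - (1 + β₁ - η * (1 - β₁) * a) * r + β₁ = 0 ∧
      s ^ 2 - (1 + β₁ - η * (1 - β₁) * a) * s + β₁ = 0 ∧
      |r| > 1 ∧
      ystar = (1 + β₁ - η * (1 - β₁) * a) * ystar - β₁ * ystar
        - η * (1 - β₁) * (v₁ ⬝ᵥ Qinv.mulVec b) ∧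
      ∀ x m : ℕ → Fin n → ℝ,
        (∀ t, m (t + 1) = β₁ • m t + (1 - β₁) • (A.mulVec (x t) + b)) →
        (∀ t, x (t + 1) = x t - η • Pinv.mulVec (m (t + 1))) →
        v₁ ⬝ᵥ Q.mulVec (x 1) - ystar ≠ s * (v₁ ⬝ᵥ Q.mulVec (x 0) - ystar) →
        Tendsto (fun t => |v₁ ⬝ᵥ Q.mulVec (x t)|) atTop atTop := by
  have hηβ : 0 < η * (1 - β₁) := mul_pos hη (by linarith)
  set c : ℝ := 1 + β₁ - η * (1 - β₁) * a with hc
  have hca : η * (1 - β₁) * a > 2 + 2 * β₁ := by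
    rw [gt_iff_lt, div_lt_iff₀ hηβ] at hsharp
    linarith [hsharp]
  have hcneg : c < -(1 + β₁) := by simp only [hc]; linarith
  set D : ℝ := c ^ 2 - 4 * β₁ with hD
  have hDpos : (1 - β₁) ^ 2 < D := by nlinarith
  have hD0 : 0 ≤ D := by nlinarith
  have hsq : Real.sqrt D ^ 2 = D := Real.sq_sqrt hD0
  have hsqgt : |c + 2| < Real.sqrt D := by
    rw [← Real.sqrt_sq_eq_abs]
    apply Real.sqrt_lt_sqrt (sq_nonneg _)
    nlinarith
  have hsqle : Real.sqrt D ≤ -c := by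
    rw [show -c = Real.sqrt ((-c) ^ 2) by rw [Real.sqrt_sq (by linarith)]]
    apply Real.sqrt_le_sqrt; nlinarith
  set r : ℝ := (c - Real.sqrt D) / 2 with hr
  set s : ℝ := (c + Real.sqrt D) / 2 with hs
  have habs : -(c + 2) ≤ |c + 2| := neg_le_abs _
  have habs' : c + 2 ≤ |c + 2| := le_abs_self _
  have hrlt : r < -1 := by
    rw [hr]; nlinarith
  have hsgt : -1 < s := by
    rw [hs]; nlinarith
  have hsle : s ≤ 0 := by rw [hs]; linarith
  have hsabs : |s| < 1 := abs_lt.2 ⟨hsgt, by linarith⟩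
  have hrabs : 1 < |r| := by
    rw [abs_of_neg (by linarith : r < 0)]; linarith
  have hrs_sum : r + s = c := by rw [hr, hs]; ring
  have hrs_prod : r * s = β₁ := by
    rw [hr, hs]
    have : (c - Real.sqrt D) / 2 * ((c + Real.sqrt D) / 2)
        = (c ^ 2 - Real.sqrt D ^ 2) / 4 := by ring
    rw [this, hsq]; rw [hD]; ring
  have hroot_r : r ^ 2 - c * r + β₁ = 0 := by
    rw [← hrs_sum, ← hrs_prod]; ring
  have hroot_s : s ^ 2 - c * s + β₁ = 0 := by
    rw [← hrs_sum, ← hrs_prod]; ring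
  set K : ℝ := η * (1 - β₁) * (v₁ ⬝ᵥ Qinv.mulVec b) with hK
  have hden : 1 + β₁ - c ≠ 0 := by intro h; nlinarith
  set ystar : ℝ := -K / (1 + β₁ - c) with hystar
  have hyeq : ystar = c * ystar - β₁ * ystar - K := by
    rw [hystar]; field_simp; ring
  refine ⟨r, s, ystar, hroot_r, hroot_s, hrabs, hyeq, ?_⟩
  intro x m hm hx hgen
  -- matrix identities
  have hQsymm : Qᵀ = Q := hQ.1
  have hQinvsymm : Qinvᵀ = Qinv := by
    have h1 : Qinvᵀ * Q = 1 := by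
      rw [← hQsymm]; rw [← Matrix.transpose_mul, hQinv, Matrix.transpose_one]
    calc Qinvᵀ = Qinvᵀ * (Q * Qinv) := by rw [hQinv, mul_one]
    _ = (Qinvᵀ * Q) * Qinv := by rw [mul_assoc]
    _ = Qinv := by rw [h1, one_mul]
  have hQPinv : Q * Pinv = Qinv := by
    calc Q * Pinv = (Qinv * Q) * (Q * Pinv) := by rw [hQinv', one_mul]
    _ = Qinv * ((Q * Q) * Pinv) := by noncomm_ring
    _ = Qinv := by rw [hQQ, hPinv, mul_one]
  have hMsymm : (Qinv * A * Qinv)ᵀ = Qinv * A * Qinv := by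
    rw [Matrix.transpose_mul, Matrix.transpose_mul, hQinvsymm, hA.eq]
    noncomm_ring
  -- scalar sequences
  set y : ℕ → ℝ := fun t => v₁ ⬝ᵥ Q.mulVec (x t) with hy
  set μ : ℕ → ℝ := fun t => v₁ ⬝ᵥ Qinv.mulVec (m t) with hμ
  set b' : ℝ := v₁ ⬝ᵥ Qinv.mulVec b with hb'
  have hcompQ : ∀ v : Fin n → ℝ, Q *ᵥ (Pinv *ᵥ v) = Qinv *ᵥ v := by
    intro v; rw [Matrix.mulVec_mulVec, hQPinv]
  have key1 : ∀ t, y (t + 1) = y t - η * μ (t + 1) := by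
    intro t
    simp only [hy, hμ, hx t, Matrix.mulVec_sub, Matrix.mulVec_smul,
      dotProduct_sub, dotProduct_smul, hcompQ, smul_eq_mul]
  have keyA : ∀ t, v₁ ⬝ᵥ Qinv *ᵥ (A *ᵥ (x t)) = a * y t := by
    intro t
    have hmat : Qinv * A = Qinv * A * Qinv * Q := by
      calc Qinv * A = Qinv * A * (Qinv * Q) := by rw [hQinv', mul_one]
      _ = Qinv * A * Qinv * Q := by noncomm_ring
    have h1 : Qinv *ᵥ (A *ᵥ (x t)) = (Qinv * A * Qinv) *ᵥ (Q *ᵥ (x t)) := by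
      rw [Matrix.mulVec_mulVec, Matrix.mulVec_mulVec, ← hmat]
    rw [h1, Matrix.dotProduct_mulVec, ← Matrix.mulVec_transpose, hMsymm, heig,
      smul_dotProduct, smul_eq_mul]
  have key2 : ∀ t, μ (t + 1) = β₁ * μ t + (1 - β₁) * (a * y t + b') := by
    intro t
    have : μ (t + 1) = β₁ * μ t
        + (1 - β₁) * ((v₁ ⬝ᵥ Qinv *ᵥ (A *ᵥ (x t))) + b') := by
      simp only [hμ, hm t, hb', Matrix.mulVec_add, Matrix.mulVec_smul,
        dotProduct_add, dotProduct_smul, smul_eq_mul]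
    rw [this, keyA t]
  -- second-order recurrence
  have hrec : ∀ t, y (t + 2) = c * y (t + 1) - β₁ * y t - K := by
    intro t
    have e1 : y (t + 2) = y (t + 1) - η * μ (t + 2) := key1 (t + 1)
    have e2 : μ (t + 2) = β₁ * μ (t + 1) + (1 - β₁) * (a * y (t + 1) + b') :=
      key2 (t + 1)
    have e3 : y (t + 1) = y t - η * μ (t + 1) := key1 t
    rw [hc, hK]
    linear_combination e1 - η * e2 - β₁ * e3
  set z : ℕ → ℝ := fun t => y t - ystar with hz
  have hzrec : ∀ t, z (t + 2) = c * z (t + 1) - β₁ * z t := by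
    intro t
    simp only [hz]
    linear_combination hrec t - hyeq
  set w : ℕ → ℝ := fun t => z (t + 1) - s * z t with hw
  have hwrec : ∀ t, w (t + 1) = r * w t := by
    intro t
    simp only [hw]
    rw [hzrec t]
    have h1 : c = r + s := hrs_sum.symm
    have h2 : β₁ = r * s := hrs_prod.symm
    rw [h1, h2]; ring
  have hwpow : ∀ t, w t = r ^ t * w 0 := by
    intro t
    induction t with
    | zero => simp
    | succ k ih => rw [hwrec k, ih]; ring
  have hw0 : w 0 ≠ 0 := by
    simp only [hw, hz, hy]
    intro h
    apply hgen
    linarith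
  have hrsne : r - s ≠ 0 := by
    intro h
    have : r = s := by linarith
    rw [this] at hrabs
    exact absurd (lt_trans hrabs hsabs) (lt_irrefl _)
  -- closed form
  have hclosed : ∀ t, z t = s ^ t * z 0 + w 0 * (r ^ t - s ^ t) / (r - s) := by
    intro t
    induction t with
    | zero => simp
    | succ k ih =>
      have hzk : z (k + 1) = s * z k + w k := by simp only [hw]; ring
      rw [hzk, ih, hwpow k]
      field_simp
      ring
  set C : ℝ := w 0 / (r - s) with hC
  have hCne : C ≠ 0 := div_ne_zero hw0 hrsne
  have hCpos : 0 < |C| := abs_pos.2 hCne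
  have hzform : ∀ t, z t = C * r ^ t + (z 0 - C) * s ^ t := by
    intro t
    rw [hclosed t, hC]
    field_simp
    ring
  set B : ℝ := |z 0 - C| + |ystar| with hB
  have hbound : ∀ t, |C| * |r| ^ t - B ≤ |y t| := by
    intro t
    have h1 : |z t| ≤ |y t| + |ystar| := by
      simp only [hz]
      exact abs_sub _ _
    have h2 : |C| * |r| ^ t - |z 0 - C| ≤ |z t| := by
      have e1 : |C * r ^ t| - |(-((z 0 - C) * s ^ t))| ≤
          |C * r ^ t - (-((z 0 - C) * s ^ t))| := abs_sub_abs_le_abs_sub _ _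
      rw [abs_neg] at e1
      have e2 : C * r ^ t - (-((z 0 - C) * s ^ t)) = z t := by
        rw [hzform t]; ring
      rw [e2, abs_mul, abs_mul, abs_pow, abs_pow] at e1
      have e3 : |s| ^ t ≤ 1 := pow_le_one₀ (abs_nonneg _) hsabs.le
      have e4 : |z 0 - C| * |s| ^ t ≤ |z 0 - C| := by
        calc |z 0 - C| * |s| ^ t ≤ |z 0 - C| * 1 :=
          mul_le_mul_of_nonneg_left e3 (abs_nonneg _)
        _ = |z 0 - C| := mul_one _
      linarith
    rw [hB]
    linarith
  have htend : Tendsto (fun t : ℕ => |C| * |r| ^ t - B) atTop atTop := by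
    have h1 : Tendsto (fun t : ℕ => |r| ^ t) atTop atTop :=
      tendsto_pow_atTop_atTop_of_one_lt hrabs
    have h2 : Tendsto (fun t : ℕ => |C| * |r| ^ t) atTop atTop :=
      Tendsto.const_mul_atTop hCpos h1
    exact tendsto_atTop_add_const_right atTop (-B) h2
  exact tendsto_atTop_mono hbound htend
end

section
/- For 0 ≤ β < 1, the roots of z² − (1+β−λ)z + β are real with at least one root less than or equal to −1 if and only if λ ≥ 2 + 2β; moreover both roots lie strictly inside the unit disk for all 0 < λ < 2 + 2β. -/
theorem heavyball_roots_real_le_neg_one_iff (β lam : ℝ) (hβ0 : 0 ≤ β) (hβ1 : β < 1)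
    (z₁ z₂ : ℂ)
    (hfact : ∀ z : ℂ, z ^ 2 - (1 + (β : ℂ) - (lam : ℂ)) * z + (β : ℂ)
      = (z - z₁) * (z - z₂)) :
    ((z₁.im = 0 ∧ z₂.im = 0 ∧ (z₁.re ≤ -1 ∨ z₂.re ≤ -1)) ↔ lam ≥ 2 + 2 * β) ∧
    (0 < lam → lam < 2 + 2 * β → ‖z₁‖ < 1 ∧ ‖z₂‖ < 1) := by
  have hp : z₁ * z₂ = (β : ℂ) := by linear_combination -(hfact 0)
  have hs : z₁ + z₂ = 1 + (β : ℂ) - (lam : ℂ) := by linear_combination hp + hfact 1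
  set a := z₁.re with ha
  set b := z₁.im with hb
  set c := z₂.re with hc
  set d := z₂.im with hd
  have e1 : a * c - b * d = β := by
    have := congrArg Complex.re hp; simpa [Complex.mul_re] using this
  have e2 : a * d + b * c = 0 := by
    have := congrArg Complex.im hp; simpa [Complex.mul_im] using this
  have e3 : a + c = 1 + β - lam := by
    have := congrArg Complex.re hs; simpa using this
  have e4 : b + d = 0 := by
    have := congrArg Complex.im hs; simpa using this
  constructor
  · constructor
    · rintro ⟨hb0, hd0, hle⟩
      rw [hb0] at e1 e2; rw [hd0] at e1 e2
      simp at e1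
      rcases hle with h | h
      · -- a ≤ -1, show c ≥ -1 then (1+a)(1+c) ≤ 0
        have hcge : c ≥ -1 := by nlinarith
        nlinarith [mul_nonneg (by linarith : (0:ℝ) ≤ -(1+a)) (by linarith : (0:ℝ) ≤ 1+c)]
      · have hage : a ≥ -1 := by nlinarith
        nlinarith [mul_nonneg (by linarith : (0:ℝ) ≤ -(1+c)) (by linarith : (0:ℝ) ≤ 1+a)]
    · intro hlam
      have hb0 : b = 0 := by
        by_contra hbne
        have hdc : d = -b := by linarith
        have hca : c = a := by
          have : b * (c - a) = 0 := by rw [hdc] at e2; ring_nf; ring_nf at e2; linarith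
          rcases mul_eq_zero.mp this with h | h
          · exact absurd h hbne
          · linarith
        rw [hca, hdc] at e1; rw [hca] at e3
        have hb2 : 0 < b * b := mul_self_pos.mpr hbne
        nlinarith [hb2, sq_nonneg (1 - β), sq_nonneg (2*a + 1 + β),
          mul_nonneg (show (0:ℝ) ≤ -(2*a + 1 + β) by linarith) (show (0:ℝ) ≤ 1 + β by linarith)]
      have hd0 : d = 0 := by linarith
      refine ⟨hb0, hd0, ?_⟩
      rw [hb0, hd0] at e1
      simp at e1
      by_contra hcon
      push_neg at hcon
      obtain ⟨h1, h2⟩ := hcon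
      nlinarith [mul_pos (by linarith : (0:ℝ) < 1+a) (by linarith : (0:ℝ) < 1+c)]
  · intro hl1 hl2
    have habs : ∀ x : ℂ, Complex.normSq x < 1 → ‖x‖ < 1 := by
      intro x hx
      have h1 : (‖x‖)^2 < 1 := by rw [Complex.sq_norm]; exact hx
      nlinarith [norm_nonneg x]
    by_cases hb0 : b = 0
    · have hd0 : d = 0 := by linarith
      rw [hb0] at e1; rw [hd0] at e1; simp at e1
      have haa : a < 1 ∧ -1 < a ∧ c < 1 ∧ -1 < c := by
        refine ⟨?_, ?_, ?_, ?_⟩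
        · by_contra h; push_neg at h
          have : c > 1 := by nlinarith
          nlinarith
        · by_contra h; push_neg at h
          have : c < -1 := by nlinarith
          nlinarith
        · by_contra h; push_neg at h
          have : a > 1 := by nlinarith
          nlinarith
        · by_contra h; push_neg at h
          have : a < -1 := by nlinarith
          nlinarith
      obtain ⟨q1, q2, q3, q4⟩ := haa
      constructor
      · apply habs; rw [Complex.normSq_apply]; rw [← ha, ← hb, hb0]; nlinarith
      · apply habs; rw [Complex.normSq_apply]; rw [← hc, ← hd, hd0]; nlinarith
    · have hdc : d = -b := by linarith
      have hca : c = a := by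
        have : b * (c - a) = 0 := by rw [hdc] at e2; nlinarith
        rcases mul_eq_zero.mp this with h | h
        · exact absurd h hb0
        · linarith
      have key : a * a + b * b = β := by rw [hca, hdc] at e1; nlinarith
      constructor
      · apply habs; rw [Complex.normSq_apply, ← ha, ← hb]; linarith
      · apply habs; rw [Complex.normSq_apply, ← hc, ← hd, hca, hdc]; nlinarith
end

section
/- Gradient descent with momentum is repelled from sharp regions in the following sense: if EmaHB(η, β₁) converges to a point x* of a twice continuously differentiable function f, where x* is a strict local minimum with Hessian H(x*), and convergence occurs with x_t ≠ x* for infinitely many t along the top eigendirection, then on the quadratic Taylor model at x* the top Hessian eigenvalue must satisfy λ₁(H(x*)) ≤ (2 + 2β₁)/(η(1 − β₁)); equivalently, if λ₁ exceeds this threshold then the linearized dynamics at x* are exponentially unstable. -/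
open Matrix

theorem emaHB_linearized_instability_at_sharp_minimum (n : ℕ)
    (H : Matrix (Fin n) (Fin n) ℝ) (hH : H.IsSymm)
    (xstar : Fin n → ℝ) (q : Fin n → ℝ) (hq : q ≠ 0) (a : ℝ)
    (heig : H.mulVec q = a • q) (η β₁ : ℝ)
    (hβ0 : 0 ≤ β₁) (hβ1 : β₁ < 1) (hη : 0 < η)
    (hsharp : a > (2 + 2 * β₁) / (η * (1 - β₁))) :
    ∃ x m : ℕ → Fin n → ℝ,
      (∀ t, m (t + 1) = β₁ • m t + (1 - β₁) • H.mulVec (x t - xstar)) ∧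
      (∀ t, x (t + 1) = x t - η • m (t + 1)) ∧
      ∃ ρ C : ℝ, 1 < ρ ∧ 0 < C ∧
        ∀ t, C * ρ ^ t ≤ |q ⬝ᵥ (x t - xstar)| := by
  have h1β : (0:ℝ) < 1 - β₁ := by linarith
  have hpos : 0 < η * (1 - β₁) := by positivity
  have hs2 : 2 + 2 * β₁ < η * (1 - β₁) * a := by
    have h := (div_lt_iff₀ hpos).mp hsharp
    nlinarith
  -- the unstable root of ρ² + b ρ + β₁ = 0
  set b : ℝ := η * (1 - β₁) * a - 1 - β₁ with hbdef
  have hbgt : 1 + β₁ < b := by simp only [hbdef]; linarith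
  have hD : 0 ≤ b ^ 2 - 4 * β₁ := by nlinarith [sq_nonneg (1 - β₁)]
  set D : ℝ := b ^ 2 - 4 * β₁ with hDdef
  set ρ₀ : ℝ := (-b - Real.sqrt D) / 2 with hρdef
  have hsq : Real.sqrt D ^ 2 = D := Real.sq_sqrt hD
  have hroot : ρ₀ ^ 2 + b * ρ₀ + β₁ = 0 := by
    simp only [hρdef]
    have : D = b ^ 2 - 4 * β₁ := hDdef
    nlinarith [hsq]
  have hsqlt : 2 - b < Real.sqrt D := by
    have h1 : (2 - b) ^ 2 < D := by simp only [hDdef]; nlinarith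
    have h2 := Real.sqrt_lt_sqrt (sq_nonneg (2 - b)) h1
    rw [Real.sqrt_sq_eq_abs] at h2
    calc 2 - b ≤ |2 - b| := le_abs_self _
      _ < Real.sqrt D := h2
  have hρlt : ρ₀ < -1 := by
    simp only [hρdef]; linarith
  have hden : ρ₀ - β₁ ≠ 0 := by intro h; linarith [h]; 
  set δ : ℝ := (1 - β₁) * a / (ρ₀ - β₁) with hδdef
  have hδ1 : δ * (ρ₀ - β₁) = (1 - β₁) * a := by
    simp only [hδdef]; field_simp
  have hI : δ * ρ₀ = β₁ * δ + (1 - β₁) * a := by linear_combination hδ1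
  have hII : ρ₀ = 1 - η * δ * ρ₀ := by
    have key : (ρ₀ - β₁) * (ρ₀ - 1 + η * δ * ρ₀) = 0 := by
      linear_combination hroot + η * ρ₀ * hδ1 - ρ₀ * hbdef
    rcases mul_eq_zero.mp key with h | h
    · exact absurd h hden
    · linarith
  refine ⟨fun t => xstar + ρ₀ ^ t • q, fun t => (δ * ρ₀ ^ t) • q, ?_, ?_, ?_⟩
  · intro t
    have hx : H.mulVec ((xstar + ρ₀ ^ t • q) - xstar) = (ρ₀ ^ t * a) • q := by
      rw [show (xstar + ρ₀ ^ t • q) - xstar = ρ₀ ^ t • q from by simp,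
        Matrix.mulVec_smul, heig, smul_smul]
    rw [hx]
    funext i
    simp only [Pi.add_apply, Pi.smul_apply, smul_eq_mul]
    linear_combination (ρ₀ ^ t * q i) * hI
  · intro t
    funext i
    simp only [Pi.add_apply, Pi.sub_apply, Pi.smul_apply, smul_eq_mul]
    linear_combination (ρ₀ ^ t * q i) * hII
  · have hCnn : 0 ≤ q ⬝ᵥ q := Finset.sum_nonneg fun i _ => mul_self_nonneg (q i)
    have hCpos : 0 < q ⬝ᵥ q :=
      lt_of_le_of_ne hCnn (fun h => hq (dotProduct_self_eq_zero.mp h.symm))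
    refine ⟨-ρ₀, q ⬝ᵥ q, by linarith, hCpos, ?_⟩
    intro t
    have hx : (xstar + ρ₀ ^ t • q) - xstar = ρ₀ ^ t • q := by simp
    rw [hx, dotProduct_smul, smul_eq_mul, abs_mul, abs_pow,
      abs_of_neg (by linarith : ρ₀ < 0), abs_of_nonneg hCnn]
    nlinarith [pow_pos (by linarith : (0:ℝ) < -ρ₀) t]
end

section
/- For vanilla GD on a 1-D quadratic with curvature a and step η, if a = (1+ε)·(2/η) for ε > 0 then the asymptotic growth factor per step is 1 + 2ε; for standard heavy-ball with β = 0.9, at curvature (1+ε) times its threshold (2+2β)/η, the largest root magnitude of z² − (1+β−(1+ε)(2+2β))z + β is strictly larger than 1 + 2ε for all sufficiently small ε > 0. -/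
theorem growth_factor_comparison (η : ℝ) (hη : 0 < η) :
    (∀ ε a : ℝ, 0 < ε → a = (1 + ε) * (2 / η) → |1 - η * a| = 1 + 2 * ε) ∧
    (∃ ε₀ : ℝ, 0 < ε₀ ∧ ∀ ε : ℝ, 0 < ε → ε < ε₀ →
      ∃ z : ℝ, z ^ 2 - (1 + 0.9 - (1 + ε) * (2 + 2 * 0.9)) * z + 0.9 = 0 ∧
        1 + 2 * ε < |z|) := by
  constructor
  · intro ε a hε ha
    subst ha
    have hη' : η ≠ 0 := ne_of_gt hη
    rw [show 1 - η * ((1 + ε) * (2 / η)) = -(1 + 2 * ε) by field_simp; ring]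
    rw [abs_neg, abs_of_pos (by linarith)]
  · refine ⟨1, one_pos, fun ε hε _ => ?_⟩
    set s : ℝ := 1.9 + 3.8 * ε with hs
    have hD : (0:ℝ) ≤ s ^ 2 - 3.6 := by nlinarith
    set r := Real.sqrt (s ^ 2 - 3.6) with hr
    have hr2 : r ^ 2 = s ^ 2 - 3.6 := Real.sq_sqrt hD
    have hrpos : 0 ≤ r := Real.sqrt_nonneg _
    refine ⟨-(s + r) / 2, ?_, ?_⟩
    · have hb : (1 + 0.9 - (1 + ε) * (2 + 2 * 0.9)) = -s := by rw [hs]; ring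
      rw [hb]; nlinarith [hr2]
    · have hlt : 0.1 + 0.2 * ε < r := by nlinarith [hr2, hrpos]
      rw [abs_of_neg (by nlinarith : -(s + r) / 2 < 0)]
      nlinarith
end
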